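/- Let p be an odd prime, n ≥ 2, and k ≥ 1, i ≥ 1 integers. Then for every y ∈ SL_n(ℤ/p^kℤ) such that every entry of y − 1 is divisible by p^{i+1}, there exist x, z ∈ SL_n(ℤ/p^kℤ) with y = x^p · z, such that every entry of x − 1 is divisible by p^i and every entry of z − 1 is divisible by p^{min(i+2, k)}. -/

import Mathlib

open Matrix


lemma nat_choose_dvd {p i j : ℕ} (hp : p.Prime) (hp3 : 3 ≤ p) (hi : 1 ≤ i) (hj : j + 2 ≤ p) :
    p ^ (i + 2) ∣ p.choose (j + 2) * p ^ (i * (j + 2)) := by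
  rcases eq_or_lt_of_le hj with he | hlt
  · exact Dvd.dvd.mul_left (pow_dvd_pow p (by nlinarith)) _
  · obtain ⟨c, hc⟩ := hp.dvd_choose_self (by omega : j + 2 ≠ 0) hlt
    obtain ⟨d, hd⟩ := pow_dvd_pow p (by nlinarith : i + 1 ≤ i * (j + 2))
    exact ⟨c * d, by rw [hc, hd]; ring⟩

lemma zmod_p_dvd_of_pow_mul_eq_zero {p k m : ℕ} (hp : p.Prime) (hm : m + 1 ≤ k)
    {t : ZMod (p ^ k)} (h : (p : ZMod (p ^ k)) ^ m * t = 0) : (p : ZMod (p ^ k)) ∣ t := by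
  haveI : NeZero (p ^ k) := ⟨pow_ne_zero k hp.ne_zero⟩
  have h2 : ((p ^ m * t.val : ℕ) : ZMod (p ^ k)) = 0 := by
    push_cast [ZMod.natCast_zmod_val]; exact h
  rw [ZMod.natCast_eq_zero_iff] at h2
  have h3 : p ^ (m + 1) ∣ p ^ m * t.val := (pow_dvd_pow p hm).trans h2
  rw [pow_succ] at h3
  have h4 : p ∣ t.val := (Nat.mul_dvd_mul_iff_left (pow_pos hp.pos m)).mp h3
  obtain ⟨c, hc⟩ := h4
  exact ⟨(c : ZMod (p ^ k)), by rw [← ZMod.natCast_zmod_val t, hc]; push_cast; ring⟩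

lemma zmod_unit_of_p_dvd_sub_one {p k : ℕ} (hp : p.Prime) {u : ZMod (p ^ k)}
    (h : (p : ZMod (p ^ k)) ∣ u - 1) : IsUnit u := by
  obtain ⟨s, hs⟩ := h
  have hnil : IsNilpotent ((p : ZMod (p ^ k)) * s) := by
    refine ⟨k, ?_⟩
    rw [mul_pow]
    have : (p : ZMod (p ^ k)) ^ k = 0 := by
      rw [← Nat.cast_pow, ZMod.natCast_self]
    rw [this, zero_mul]
  have := hnil.isUnit_one_add
  have hu : u = 1 + (p : ZMod (p ^ k)) * s := by linear_combination hs
  rwa [← hu] at this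

lemma zmod_p_dvd_of_castHom_eq_zero {p k : ℕ} (hp : p.Prime) (hk : 1 ≤ k)
    {x : ZMod (p ^ k)}
    (h : (ZMod.castHom (dvd_pow_self p (by omega : k ≠ 0)) (ZMod p)) x = 0) :
    (p : ZMod (p ^ k)) ∣ x := by
  haveI : NeZero (p ^ k) := ⟨pow_ne_zero k hp.ne_zero⟩
  rw [← ZMod.natCast_zmod_val x, map_natCast, ZMod.natCast_eq_zero_iff] at h
  obtain ⟨c, hc⟩ := h
  exact ⟨(c : ZMod (p ^ k)), by rw [← ZMod.natCast_zmod_val x, hc]; push_cast; ring⟩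

lemma det_dvd_sub_one {p k n : ℕ} (hp : p.Prime) (hk : 1 ≤ k)
    {M : Matrix (Fin n) (Fin n) (ZMod (p ^ k))}
    (h : ∀ a b, (p : ZMod (p ^ k)) ∣ (M - 1) a b) :
    (p : ZMod (p ^ k)) ∣ M.det - 1 := by
  set φ := ZMod.castHom (dvd_pow_self p (by omega : k ≠ 0)) (ZMod p) with hφ
  apply zmod_p_dvd_of_castHom_eq_zero hp hk
  have hmap : M.map φ = 1 := by
    ext a b
    obtain ⟨s, hs⟩ := h a b
    have : M a b = (1 : Matrix (Fin n) (Fin n) (ZMod (p ^ k))) a b + (p : ZMod (p ^ k)) * s := by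
      rw [Matrix.sub_apply] at hs; linear_combination hs
    rw [map_apply, this]
    simp [one_apply, apply_ite φ]
  have hdet : φ M.det = 1 := by
    rw [RingHom.map_det]
    show (M.map φ).det = 1
    rw [hmap, det_one]
  rw [map_sub, hdet, _root_.map_one, sub_self]

lemma entries_dvd_mul {n : ℕ} {R : Type*} [CommRing R] {d : R}
    {M N : Matrix (Fin n) (Fin n) R} (h : ∀ a b, d ∣ N a b) :
    ∀ a b, d ∣ (M * N) a b := fun a b => by
  rw [mul_apply]; exact Finset.dvd_sum fun c _ => (h c b).mul_left _

/-- For `p` an odd prime: every `y ∈ SL_n(ℤ/p^kℤ)` with `y ≡ 1 (mod p^{i+1})` can be written as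
`y = x^p · z` with `x ≡ 1 (mod p^i)` and `z ≡ 1 (mod p^{min(i+2,k)})`. -/
theorem congruence_pth_power_surjective (p : ℕ) (hp : p.Prime) (hodd : Odd p)
    (n : ℕ) (hn : 2 ≤ n) (k i : ℕ) (hk : 1 ≤ k) (hi : 1 ≤ i)
    (y : Matrix.SpecialLinearGroup (Fin n) (ZMod (p ^ k)))
    (hy : ∀ a b : Fin n,
      (p : ZMod (p ^ k)) ^ (i + 1) ∣ ((y : Matrix (Fin n) (Fin n) (ZMod (p ^ k))) - 1) a b) :
    ∃ x z : Matrix.SpecialLinearGroup (Fin n) (ZMod (p ^ k)),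
      y = x ^ p * z ∧
      (∀ a b : Fin n,
        (p : ZMod (p ^ k)) ^ i ∣ ((x : Matrix (Fin n) (Fin n) (ZMod (p ^ k))) - 1) a b) ∧
      (∀ a b : Fin n,
        (p : ZMod (p ^ k)) ^ (min (i + 2) k) ∣
          ((z : Matrix (Fin n) (Fin n) (ZMod (p ^ k))) - 1) a b) := by
  have hp3 : 3 ≤ p := by
    have h2 := hp.two_le
    obtain ⟨m, hm⟩ := hodd
    omega
  set R := ZMod (p ^ k) with hR
  by_cases hki : k ≤ i + 1
  · -- trivial case : y = 1
    have hz : (p : R) ^ (i + 1) = 0 := by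
      have : ((p ^ (i + 1) : ℕ) : R) = 0 := by
        rw [ZMod.natCast_eq_zero_iff]
        exact pow_dvd_pow p hki
      rwa [Nat.cast_pow] at this
    have hy1 : (y : Matrix (Fin n) (Fin n) R) = 1 := by
      ext a b
      have := hy a b
      rw [hz, zero_dvd_iff, Matrix.sub_apply, sub_eq_zero] at this
      exact this
    refine ⟨1, 1, ?_, ?_, ?_⟩
    · have : y = 1 := Subtype.ext (by rw [hy1]; rfl)
      rw [this, one_pow, mul_one]
    · intro a b
      simp
    · intro a b
      simp
  · push_neg at hki
    have hik : i + 2 ≤ k := by omega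
    have hmin : min (i + 2) k = i + 2 := min_eq_left hik
    rw [hmin]
    set Y := (y : Matrix (Fin n) (Fin n) R) with hYdef
    set A : Matrix (Fin n) (Fin n) R := fun a b => (hy a b).choose with hAdef
    have hA : ∀ a b, (Y - 1) a b = (p : R) ^ (i + 1) * A a b := fun a b => (hy a b).choose_spec
    have hYA : Y = 1 + (p : R) ^ (i + 1) • A := by
      ext a b
      have h1 := hA a b
      rw [Matrix.sub_apply] at h1
      rw [Matrix.add_apply, Matrix.smul_apply, smul_eq_mul]
      linear_combination h1
    have key : ∀ r : R, ∃ e : R, (1 + r • A).det = 1 + A.trace * r + e * r ^ 2 :=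
      fun r => ⟨_, Matrix.det_one_add_smul r A⟩
    have hdetY : Y.det = 1 := y.prop
    obtain ⟨e, hedet⟩ := key ((p : R) ^ (i + 1))
    rw [hYA, hedet] at hdetY
    have h0 : (p : R) ^ (i + 1) * (A.trace + e * (p : R) ^ (i + 1)) = 0 := by
      linear_combination hdetY
    have htrA : (p : R) ∣ A.trace := by
      have h1 := zmod_p_dvd_of_pow_mul_eq_zero hp (by omega : (i + 1) + 1 ≤ k) h0
      have h2 : (p : R) ∣ e * (p : R) ^ (i + 1) :=
        ((dvd_pow_self (p : R) (by omega : i + 1 ≠ 0))).mul_left e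
      have h3 := dvd_sub h1 h2
      simpa using h3
    set x0 : Matrix (Fin n) (Fin n) R := 1 + (p : R) ^ i • A with hx0
    have hdetx0 : (p : R) ^ (i + 1) ∣ x0.det - 1 := by
      obtain ⟨e', hedet'⟩ := key ((p : R) ^ i)
      obtain ⟨w, hw⟩ := htrA
      obtain ⟨u, hu⟩ : (p : R) ^ (i + 1) ∣ ((p : R) ^ i) ^ 2 := by
        rw [← pow_mul]; exact pow_dvd_pow _ (by omega)
      refine ⟨w + e' * u, ?_⟩
      rw [hx0, hedet']
      linear_combination (p : R) ^ i * hw + e' * hu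
    have hn0 : 0 < n := by omega
    set i0 : Fin n := ⟨0, hn0⟩ with hi0
    set N : Matrix (Fin n) (Fin n) R := updateRow x0 i0 (Pi.single i0 1) with hN
    have hND : ∀ a b, (p : R) ∣ (N - 1) a b := by
      intro a b
      by_cases ha : a = i0
      · subst ha
        rw [Matrix.sub_apply, hN, updateRow_self, one_apply, Pi.single_apply]
        simp [eq_comm]
      · rw [Matrix.sub_apply, hN, updateRow_ne ha, hx0]
        have h1 : (1 + (p : R) ^ i • A) a b - (1 : Matrix (Fin n) (Fin n) R) a b
            = (p : R) ^ i * A a b := by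
          rw [Matrix.add_apply, Matrix.smul_apply, smul_eq_mul]; ring
        rw [h1]
        exact ((dvd_pow_self (p : R) (by omega : i ≠ 0)).mul_right _)
    have hDunit : IsUnit N.det := zmod_unit_of_p_dvd_sub_one hp (det_dvd_sub_one hp hk hND)
    obtain ⟨Du, hDu⟩ := hDunit
    obtain ⟨e0, he0⟩ := hdetx0
    set v : R := -e0 * ((Du⁻¹ : Rˣ) : R) with hv
    set E : Matrix (Fin n) (Fin n) R := Matrix.single i0 i0 1 with hE
    set B : Matrix (Fin n) (Fin n) R := A + ((p : R) * v) • E with hB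
    set X : Matrix (Fin n) (Fin n) R := 1 + (p : R) ^ i • B with hX
    have hXu : X = updateRow x0 i0 (x0 i0 + ((p : R) ^ (i + 1) * v) • (Pi.single i0 1 : Fin n → R)) := by
      ext a b
      by_cases ha : a = i0
      · subst ha
        rw [updateRow_self]
        simp only [hX, hx0, hB, hE, Matrix.add_apply, Matrix.smul_apply, smul_eq_mul, Pi.add_apply,
          Pi.smul_apply, Matrix.single, of_apply, Pi.single_apply, one_apply]
        by_cases hb : b = i0
        · simp only [hb, if_pos rfl, and_self, Fin.isValue]
          simp
          ring
        · have hib : ¬ (i0 = b) := fun hh => hb hh.symm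
          simp only [hb, hib, if_neg, if_false, and_false, and_true, mul_zero, add_zero,
            mul_one]
      · rw [updateRow_ne ha]
        have hia : ¬ (i0 = a) := fun hh => ha hh.symm
        simp only [hX, hx0, hB, hE, Matrix.add_apply, Matrix.smul_apply, smul_eq_mul, Matrix.single,
          of_apply, hia, false_and, if_false, mul_zero, add_zero]
    have hdetX : X.det = 1 := by
      rw [hXu, det_updateRow_add, det_updateRow_smul, updateRow_eq_self, ← hN]
      have hDinv : ((Du⁻¹ : Rˣ) : R) * N.det = 1 := by rw [← hDu]; exact Units.inv_mul Du
      linear_combination he0 + ((p : R) ^ (i + 1) * N.det) * hv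
        - ((p : R) ^ (i + 1) * e0) * hDinv
    set x : Matrix.SpecialLinearGroup (Fin n) R := ⟨X, hdetX⟩ with hxdef
    refine ⟨x, (x ^ p)⁻¹ * y, (mul_inv_cancel_left _ _).symm, ?_, ?_⟩
    · intro a b
      refine ⟨B a b, ?_⟩
      show (X - 1) a b = (p : R) ^ i * B a b
      rw [hX, Matrix.sub_apply, Matrix.add_apply, Matrix.smul_apply, smul_eq_mul]
      ring
    · -- the key congruence
      set M : Matrix (Fin n) (Fin n) R := (p : R) ^ i • B with hM
      have hXpow : X ^ p
          = (∑ j ∈ Finset.range (p - 1), (p.choose (j + 2)) • M ^ (j + 2)) + p • M + 1 := by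
        have hcomm : Commute M (1 : Matrix (Fin n) (Fin n) R) := Commute.one_right M
        have h1 : X = M + 1 := by rw [hX, hM, add_comm]
        rw [h1, hcomm.add_pow]
        have hsimp : ∀ j, M ^ j * (1 : Matrix (Fin n) (Fin n) R) ^ (p - j)
            * (p.choose j : Matrix (Fin n) (Fin n) R) = (p.choose j) • M ^ j := by
          intro j
          rw [one_pow, mul_one, ← (Nat.cast_commute (p.choose j) (M ^ j)).eq, ← nsmul_eq_mul]
        simp only [hsimp]
        rw [show p + 1 = (p - 1) + 1 + 1 by omega, Finset.sum_range_succ',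
          Finset.sum_range_succ']
        simp [pow_one, Nat.choose_one_right]
      have hkey : ∀ a b, (p : R) ^ (i + 2) ∣ (Y - X ^ p) a b := by
        intro a b
        have hMsum : ∀ j : ℕ, M ^ (j + 2) = (p : R) ^ (i * (j + 2)) • B ^ (j + 2) := by
          intro j
          rw [hM, smul_pow, ← pow_mul]
        have hBab : B a b = A a b + (p : R) * v * E a b := by
          rw [hB, Matrix.add_apply, Matrix.smul_apply, smul_eq_mul]
        have heq : (Y - X ^ p) a b
            = -((p : R) ^ (i + 2) * v * E a b)
              - ∑ j ∈ Finset.range (p - 1),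
                  (p.choose (j + 2) : R) * ((p : R) ^ (i * (j + 2)) * (B ^ (j + 2)) a b) := by
          rw [hYA, hXpow]
          simp only [hMsum]
          simp only [hM, ← Nat.cast_smul_eq_nsmul R]
          simp only [Matrix.sub_apply, Matrix.add_apply, Matrix.sum_apply, Matrix.smul_apply, smul_eq_mul]
          rw [hBab]
          ring
        rw [heq]
        refine dvd_sub (dvd_neg.mpr ?_) (Finset.dvd_sum fun j hj => ?_)
        · exact ⟨v * E a b, by ring⟩
        · have hjp : j + 2 ≤ p := by
            have := Finset.mem_range.mp hj; omega
          obtain ⟨t, ht⟩ := nat_choose_dvd hp hp3 hi hjp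
          have hcast : (p.choose (j + 2) : R) * (p : R) ^ (i * (j + 2))
              = (p : R) ^ (i + 2) * (t : R) := by
            have h2 := congrArg (Nat.cast : ℕ → R) ht
            rw [Nat.cast_mul, Nat.cast_mul, Nat.cast_pow, Nat.cast_pow] at h2
            linear_combination h2
          exact ⟨(t : R) * (B ^ (j + 2)) a b, by linear_combination ((B ^ (j + 2)) a b) * hcast⟩
      intro a b
      have hcoeXp : ((x ^ p : Matrix.SpecialLinearGroup (Fin n) R) : Matrix (Fin n) (Fin n) R)
          = X ^ p := by
        rw [Matrix.SpecialLinearGroup.coe_pow]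
      have hcoe1 : (((x ^ p)⁻¹ : Matrix.SpecialLinearGroup (Fin n) R) : Matrix (Fin n) (Fin n) R)
          * (X ^ p) = 1 := by
        rw [← hcoeXp, ← Matrix.SpecialLinearGroup.coe_mul, inv_mul_cancel]
        rfl
      have hz : ((((x ^ p)⁻¹ * y : Matrix.SpecialLinearGroup (Fin n) R))
            : Matrix (Fin n) (Fin n) R) - 1
          = (((x ^ p)⁻¹ : Matrix.SpecialLinearGroup (Fin n) R) : Matrix (Fin n) (Fin n) R)
            * (Y - X ^ p) := by
        rw [mul_sub, hcoe1, Matrix.SpecialLinearGroup.coe_mul]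
      rw [hz]
      exact entries_dvd_mul hkey a b
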